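/- Let A be an n×n real symmetric matrix, ε ∈ ℝ, and for each i let δ_i ∈ ℝ, c_i ∈ ℝ, and 0 < β̲_i < β̄_i. Suppose β ∈ ℝⁿ is primal feasible: β_i ∈ {β̲_i, β̄_i} for each i and (D − εI)B⁻¹ − A is positive semidefinite, where B = diag(β_i) and D = diag(δ_i). Suppose (Z, u) is dual feasible: Z is an n×n real symmetric positive semidefinite matrix and u ∈ ℝⁿ satisfies u_i ≥ c_i β̄_i + ((δ_i − ε)/β̄_i) Z_{ii} and u_i ≥ c_i β̲_i + ((δ_i − ε)/β̲_i) Z_{ii} for all i. Then ∑_{i=1}^n c_i β_i ≤ ∑_{i=1}^n u_i − trace(A Z). In particular, the optimal value T_C* of the combinatorial primal problem (maximize c^T β over such feasible β) is upper bounded by the optimal value D_C* of the dual semidefinite program (minimize 1^T u − trace(A Z) over such dual-feasible (Z, u)). -/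

import Mathlib

lemma psd_diag_nonneg {n : ℕ} {M : Matrix (Fin n) (Fin n) ℝ} (hM : M.PosSemidef) (i : Fin n) :
    0 ≤ M i i := by
  exact hM.diag_nonneg

lemma psd_trace_nonneg {n : ℕ} {M : Matrix (Fin n) (Fin n) ℝ} (hM : M.PosSemidef) :
    0 ≤ M.trace :=
  Finset.sum_nonneg fun i _ => psd_diag_nonneg hM i

open scoped MatrixOrder in
lemma trace_mul_psd_nonneg {n : ℕ} {M N : Matrix (Fin n) (Fin n) ℝ}
    (hM : M.PosSemidef) (hN : N.PosSemidef) : 0 ≤ (M * N).trace := by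
  obtain ⟨S, hSh, hSS⟩ : ∃ S : Matrix (Fin n) (Fin n) ℝ, S.conjTranspose = S ∧ S * S = N :=
    ⟨CFC.sqrt N, (CFC.sqrt_nonneg N).isSelfAdjoint, CFC.sqrt_mul_sqrt_self N hN.nonneg⟩
  rw [← hSS, ← Matrix.mul_assoc, Matrix.trace_mul_cycle]
  have h := hM.conjTranspose_mul_mul_same S
  rw [hSh] at h
  exact psd_trace_nonneg h

/-- **Weak duality for the combinatorial vaccination problem.**
If `β` is primal feasible (`βᵢ ∈ {β̲ᵢ, β̄ᵢ}` and `(D - εI)B⁻¹ - A ⪰ 0`) and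
`(Z, u)` is dual feasible (`Z ⪰ 0` and `uᵢ ≥ cᵢβ̄ᵢ + ((δᵢ - ε)/β̄ᵢ) Zᵢᵢ`,
`uᵢ ≥ cᵢβ̲ᵢ + ((δᵢ - ε)/β̲ᵢ) Zᵢᵢ` for all `i`), then
`∑ᵢ cᵢβᵢ ≤ ∑ᵢ uᵢ - trace(AZ)`; in particular the primal optimal value is upper
bounded by the dual optimal value. -/
theorem combinatorial_weak_duality
    {n : ℕ} (A : Matrix (Fin n) (Fin n) ℝ) (hA : A.IsSymm)
    (ε : ℝ) (δ c βlo βhi : Fin n → ℝ)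
    (hlo : ∀ i, 0 < βlo i) (hlohi : ∀ i, βlo i < βhi i)
    (β : Fin n → ℝ) (hfeas : ∀ i, β i = βlo i ∨ β i = βhi i)
    (hPSD : (Matrix.diagonal (fun i => (δ i - ε) / β i) - A).PosSemidef)
    (Z : Matrix (Fin n) (Fin n) ℝ) (hZ : Z.PosSemidef)
    (u : Fin n → ℝ)
    (hu1 : ∀ i, c i * βhi i + (δ i - ε) / βhi i * Z i i ≤ u i)
    (hu2 : ∀ i, c i * βlo i + (δ i - ε) / βlo i * Z i i ≤ u i) :
    ∑ i, c i * β i ≤ ∑ i, u i - (A * Z).trace := by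
  have key : ∀ i, c i * β i + (δ i - ε) / β i * Z i i ≤ u i := by
    intro i
    rcases hfeas i with h | h <;> rw [h]
    · exact hu2 i
    · exact hu1 i
  have htr : ((Matrix.diagonal (fun i => (δ i - ε) / β i) - A) * Z).trace ≥ 0 :=
    trace_mul_psd_nonneg hPSD hZ
  have hexp : ((Matrix.diagonal (fun i => (δ i - ε) / β i) - A) * Z).trace
      = (∑ i, (δ i - ε) / β i * Z i i) - (A * Z).trace := by
    rw [Matrix.sub_mul, Matrix.trace_sub]
    congr 1
    rw [Matrix.trace]
    simp [Matrix.diag, Matrix.mul_apply, Matrix.diagonal_apply]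
  have h2 : (A * Z).trace ≤ ∑ i, (δ i - ε) / β i * Z i i := by linarith [hexp ▸ htr]
  have h3 : ∑ i, (c i * β i + (δ i - ε) / β i * Z i i) ≤ ∑ i, u i :=
    Finset.sum_le_sum fun i _ => key i
  rw [Finset.sum_add_distrib] at h3
  linarith
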